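/- For n ≥ 2, the cube in ℤⁿ generated by the origin and the vectors e₁, and e₁ + 2eᵢ for i = 2,…,n, is lattice-regular: the generating symmetries (transposition of any two adjacent generating vectors, and the map sending v₁ to −v₁ composed with translation by v₁) are realized by matrices in GL(n,ℤ). -/
import Mathlib


/-- The vertex of the parallelepiped generated by the vectors `v 0, …, v (n-1)`
(based at the origin) labelled by the subset `s : Fin n → Bool`. -/
def cubeVert (n : ℕ) (v : Fin n → Fin n → ℤ) (s : Fin n → Bool) : Fin n → ℤ :=
  ∑ i : Fin n, if s i then v i else 0

/-- The generating vectors `e₁` and `e₁ + 2eᵢ` (`i = 2, …, n`) of the cube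
`{4,3^{n-2}}^L_3`. -/
def cube3Gen (n : ℕ) : Fin n → Fin n → ℤ :=
  fun i j =>
    if (i : ℕ) = 0 then (if (j : ℕ) = 0 then 1 else 0)
    else if (j : ℕ) = 0 then 1
    else if j = i then 2 else 0

/-- `Bool` to `ℤ` as 0/1. -/
def bi (b : Bool) : ℤ := if b then 1 else 0

/-- The sign `1 - 2 * bi b`. -/
def sg (b : Bool) : ℤ := if b then -1 else 1

lemma bi_xor (a b : Bool) : bi (xor a b) = bi a + bi b - 2 * bi a * bi b := by
  cases a <;> cases b <;> simp [bi]

section aux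
variable {n : ℕ} [NeZero n]

lemma cube3Gen_col0 (i : Fin n) : cube3Gen n i 0 = 1 := by
  unfold cube3Gen; split <;> simp

lemma cube3Gen_diag (i : Fin n) (hi : (i : ℕ) ≠ 0) : cube3Gen n i i = 2 := by
  simp [cube3Gen, hi]

lemma cube3Gen_ne (i k : Fin n) (hk : (k : ℕ) ≠ 0) (hki : k ≠ i) : cube3Gen n i k = 0 := by
  unfold cube3Gen; split <;> simp [hk, hki]

/-- The matrix realizing the signed permutation `(σ, ε)`. -/
def cubeMat (σ : Equiv.Perm (Fin n)) (ε : Fin n → Bool) : Matrix (Fin n) (Fin n) ℤ :=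
  Matrix.of fun i k =>
    if i = 0 then
      (if k = 0 then sg (ε (σ.symm 0)) else 0) + (bi (ε (σ.symm 0)) - bi (ε (σ.symm k)))
    else if σ i = 0 then
      (if k = 0 then 3 * sg (ε i) else 0) - sg (ε i)
    else if k = σ i then sg (ε i) else 0

/-- The translation vector realizing the signed permutation `(σ, ε)`. -/
def cubeB (σ : Equiv.Perm (Fin n)) (ε : Fin n → Bool) : Fin n → ℤ :=
  fun i => if i = 0 then ∑ j, bi (ε j) else 2 * bi (ε i)

lemma vert_apply (s : Fin n → Bool) (k : Fin n) :
    cubeVert n (cube3Gen n) s k =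
      if k = 0 then ∑ j, bi (s j) else 2 * bi (s k) := by
  unfold cubeVert
  rw [Finset.sum_apply]
  by_cases hk : k = 0
  · subst hk
    rw [if_pos rfl]
    apply Finset.sum_congr rfl
    intro i _
    cases hsi : s i <;> simp [cube3Gen_col0, bi]
  · rw [if_neg hk]
    have hk' : (k : ℕ) ≠ 0 := fun h => hk (Fin.ext h)
    have hterm : ∀ i : Fin n, (if s i then cube3Gen n i else 0) k
        = if k = i then (if s k then 2 else 0) else 0 := by
      intro i
      by_cases hki : k = i
      · subst hki
        have h2 : cube3Gen n k k = 2 := cube3Gen_diag k hk'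
        cases hsk : s k <;> simp [h2]
      · have h0 : cube3Gen n i k = 0 := cube3Gen_ne i k hk' hki
        cases hsi : s i <;> simp [h0, hki]
    rw [Finset.sum_congr rfl fun i _ => hterm i, Finset.sum_ite_eq,
      if_pos (Finset.mem_univ _)]
    cases hsk : s k <;> simp [bi]

lemma sum_vert (s : Fin n → Bool) :
    ∑ k, cubeVert n (cube3Gen n) s k = 3 * (∑ j, bi (s j)) - 2 * bi (s 0) := by
  have hterm : ∀ k : Fin n, cubeVert n (cube3Gen n) s k
      = (if k = 0 then (∑ j, bi (s j)) - 2 * bi (s 0) else 0) + 2 * bi (s k) := by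
    intro k
    rw [vert_apply]
    by_cases hk : k = 0
    · subst hk; rw [if_pos rfl, if_pos rfl]; ring
    · rw [if_neg hk, if_neg hk]; ring
  rw [Finset.sum_congr rfl fun k _ => hterm k, Finset.sum_add_distrib,
    Finset.sum_ite_eq', if_pos (Finset.mem_univ _), ← Finset.mul_sum]
  ring

lemma cube_realize (σ : Equiv.Perm (Fin n)) (ε : Fin n → Bool) (s : Fin n → Bool) :
    (cubeMat σ ε).mulVec (cubeVert n (cube3Gen n) s) + cubeB σ ε =
      cubeVert n (cube3Gen n) (fun i => xor (ε i) (s (σ i))) := by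
  funext i
  set x := cubeVert n (cube3Gen n) s with hx
  simp only [Pi.add_apply, Matrix.mulVec, dotProduct, cubeMat, cubeB, Matrix.of_apply]
  by_cases hi : i = 0
  · -- row 0
    subst hi
    simp only [eq_self_iff_true, if_true]
    simp only [add_mul, sub_mul, ite_mul, zero_mul]
    rw [Finset.sum_add_distrib, Finset.sum_sub_distrib, Finset.sum_ite_eq',
      if_pos (Finset.mem_univ _), ← Finset.mul_sum]
    have hre : ∑ k, bi (ε (σ.symm k)) * x k = ∑ j, bi (ε j) * x (σ j) := by
      rw [← Equiv.sum_comp σ (fun k => bi (ε (σ.symm k)) * x k)]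
      apply Finset.sum_congr rfl
      intro j _
      rw [Equiv.symm_apply_apply]
    rw [hre]
    have hxσ : ∀ j : Fin n, x (σ j)
        = (if j = σ.symm 0 then (∑ m, bi (s m)) - 2 * bi (s 0) else 0)
          + 2 * bi (s (σ j)) := by
      intro j
      rw [hx, vert_apply]
      by_cases hj : σ j = 0
      · rw [if_pos hj, if_pos (by rw [← hj, Equiv.symm_apply_apply]), hj]
        ring
      · rw [if_neg hj, if_neg (fun h => hj (by rw [h, Equiv.apply_symm_apply]))]
        ring
    have hsum2 : ∑ j, bi (ε j) * x (σ j)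
        = bi (ε (σ.symm 0)) * ((∑ m, bi (s m)) - 2 * bi (s 0))
          + 2 * ∑ j, bi (ε j) * bi (s (σ j)) := by
      rw [Finset.sum_congr rfl fun j _ => by rw [hxσ j]]
      simp only [mul_add, mul_ite, mul_zero]
      rw [Finset.sum_add_distrib, Finset.sum_ite_eq', if_pos (Finset.mem_univ _),
        Finset.mul_sum]
      congr 1
      apply Finset.sum_congr rfl
      intro j _
      ring
    rw [hsum2]
    have hxv : x 0 = ∑ j, bi (s j) := by rw [hx, vert_apply, if_pos rfl]
    have hsv : ∑ k, x k = 3 * (∑ j, bi (s j)) - 2 * bi (s 0) := by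
      rw [hx]; exact sum_vert s
    rw [hxv, hsv]
    have hrhs : cubeVert n (cube3Gen n) (fun i => xor (ε i) (s (σ i))) 0
        = (∑ j, bi (ε j)) + (∑ j, bi (s j)) - 2 * ∑ j, bi (ε j) * bi (s (σ j)) := by
      rw [vert_apply, if_pos rfl]
      have hterm : ∀ j : Fin n, bi (xor (ε j) (s (σ j)))
          = bi (ε j) + bi (s (σ j)) - 2 * (bi (ε j) * bi (s (σ j))) := by
        intro j; rw [bi_xor]; ring
      rw [Finset.sum_congr rfl fun j _ => hterm j, Finset.sum_sub_distrib,
        Finset.sum_add_distrib, ← Finset.mul_sum]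
      congr 2
      rw [← Equiv.sum_comp σ (fun k => bi (s k))]
    rw [hrhs]
    cases hb : ε (σ.symm 0) <;>
      (simp only [sg, bi, Bool.false_eq_true, eq_self_iff_true, if_true, if_false]; try ring)
  · simp only [if_neg hi]
    by_cases hσ : σ i = 0
    · -- row mapped to direction 0
      simp only [if_pos hσ]
      simp only [sub_mul, ite_mul, zero_mul]
      rw [Finset.sum_sub_distrib, Finset.sum_ite_eq', if_pos (Finset.mem_univ _),
        ← Finset.mul_sum]
      have hxv : x 0 = ∑ j, bi (s j) := by rw [hx, vert_apply, if_pos rfl]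
      have hsv : ∑ k, x k = 3 * (∑ j, bi (s j)) - 2 * bi (s 0) := by
        rw [hx]; exact sum_vert s
      rw [hxv, hsv, vert_apply, if_neg hi, hσ]
      cases hb : ε i <;> cases hc : s 0 <;> simp [sg, bi] <;> ring
    · -- generic row
      simp only [if_neg hσ]
      simp only [ite_mul, zero_mul]
      rw [Finset.sum_ite_eq', if_pos (Finset.mem_univ _)]
      have hxv : x (σ i) = 2 * bi (s (σ i)) := by rw [hx, vert_apply, if_neg hσ]
      rw [hxv, vert_apply, if_neg hi]
      cases hb : ε i <;> cases hc : s (σ i) <;> simp [sg, bi]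

lemma eq_one_of_realize (M : Matrix (Fin n) (Fin n) ℤ) (c : Fin n → ℤ)
    (h : ∀ s, M.mulVec (cubeVert n (cube3Gen n) s) + c = cubeVert n (cube3Gen n) s) :
    M = 1 := by
  have hvf : cubeVert n (cube3Gen n) (fun _ => false) = 0 := by
    unfold cubeVert; simp
  have hc : c = 0 := by
    have := h (fun _ => false)
    rw [hvf, Matrix.mulVec_zero, zero_add] at this
    exact this
  have hv : ∀ i : Fin n, M.mulVec (cube3Gen n i) = cube3Gen n i := by
    intro i
    have hvs : cubeVert n (cube3Gen n) (fun j => decide (j = i)) = cube3Gen n i := by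
      unfold cubeVert
      rw [Finset.sum_congr rfl (fun j _ => by
        rw [show (if decide (j = i) = true then cube3Gen n j else 0)
          = (if j = i then cube3Gen n j else 0) by simp])]
      rw [Finset.sum_ite_eq', if_pos (Finset.mem_univ _)]
    have := h (fun j => decide (j = i))
    rw [hc, add_zero, hvs] at this
    exact this
  have h0gen : cube3Gen n 0 = Pi.single (0 : Fin n) 1 := by
    funext j
    by_cases hj : j = 0
    · subst hj; simp [cube3Gen, Pi.single_apply]
    · have hj' : (j : ℕ) ≠ 0 := fun h => hj (Fin.ext h)
      simp [cube3Gen, Pi.single_apply, hj, hj']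
  have hsingle0 : M.mulVec (Pi.single (0 : Fin n) 1) = Pi.single (0 : Fin n) 1 := by
    rw [← h0gen]; exact hv 0
  have hsingle : ∀ i : Fin n, M.mulVec (Pi.single i 1) = Pi.single i 1 := by
    intro i
    by_cases hi : i = 0
    · subst hi; exact hsingle0
    · have hi' : (i : ℕ) ≠ 0 := fun h => hi (Fin.ext h)
      have hdec : cube3Gen n i = cube3Gen n 0 + 2 • Pi.single i 1 := by
        funext j
        simp only [Pi.add_apply, Pi.smul_apply, Pi.single_apply, smul_eq_mul]
        by_cases hj : j = 0
        · subst hj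
          rw [cube3Gen_col0, cube3Gen_col0, if_neg (fun h => hi h.symm)]
          ring
        · have hj' : (j : ℕ) ≠ 0 := fun h => hj (Fin.ext h)
          rw [cube3Gen_ne 0 j hj' (fun h => hj' (by rw [h]; rfl))]
          by_cases hji : j = i
          · subst hji
            rw [cube3Gen_diag j hj', if_pos rfl]
            ring
          · rw [cube3Gen_ne i j hj' hji, if_neg hji]
            ring
      have h2 : M.mulVec (cube3Gen n 0 + 2 • Pi.single i 1)
          = cube3Gen n 0 + 2 • Pi.single i 1 := by rw [← hdec]; exact hv i
      rw [Matrix.mulVec_add, h0gen, hsingle0, Matrix.mulVec_smul] at h2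
      have h3 := add_left_cancel h2
      exact smul_right_injective (Fin n → ℤ) (by norm_num : (2 : ℤ) ≠ 0) h3
  ext i j
  have hmj := congrFun (hsingle j) i
  simp only [Matrix.mulVec, dotProduct, Pi.single_apply, mul_ite, mul_one, mul_zero,
    Finset.sum_ite_eq', if_pos (Finset.mem_univ _)] at hmj
  rw [hmj, Matrix.one_apply]

end aux

/-- The cube generated by the origin and the vectors `e₁`, `e₁ + 2eᵢ`
(`i = 2, …, n`) is lattice-regular: every hyperoctahedral symmetry of the
abstract cube (a signed permutation `(σ, ε)` of the generating directions,
acting on the vertex labels `s : Fin n → Bool`) is realized by a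
lattice-affine transformation; in particular so are the generating
symmetries. -/
theorem cube3_lattice_regular (n : ℕ) (hn : 2 ≤ n)
    (σ : Equiv.Perm (Fin n)) (ε : Fin n → Bool) :
    ∃ (A : Matrix (Fin n) (Fin n) ℤ) (b : Fin n → ℤ),
      (A.det = 1 ∨ A.det = -1) ∧
      ∀ s : Fin n → Bool,
        A.mulVec (cubeVert n (cube3Gen n) s) + b =
          cubeVert n (cube3Gen n) (fun i => xor (ε i) (s (σ i))) := by
  haveI : NeZero n := ⟨by omega⟩
  refine ⟨cubeMat σ ε, cubeB σ ε, ?_, cube_realize σ ε⟩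
  set A := cubeMat σ ε with hA
  set B := cubeMat σ.symm (fun i => ε (σ.symm i)) with hB
  have hcomp : ∀ s, (A * B).mulVec (cubeVert n (cube3Gen n) s)
      + (A.mulVec (cubeB σ.symm (fun i => ε (σ.symm i))) + cubeB σ ε)
      = cubeVert n (cube3Gen n) s := by
    intro s
    have h1 := cube_realize σ.symm (fun i => ε (σ.symm i)) s
    have h2 := cube_realize σ ε (fun i => xor (ε (σ.symm i)) (s (σ.symm i)))
    have hlabel : (fun i => xor (ε i) (xor (ε (σ.symm (σ i))) (s (σ.symm (σ i))))) = s := by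
      funext i
      rw [Equiv.symm_apply_apply]
      cases ε i <;> cases s i <;> simp
    rw [hlabel] at h2
    calc (A * B).mulVec (cubeVert n (cube3Gen n) s)
        + (A.mulVec (cubeB σ.symm (fun i => ε (σ.symm i))) + cubeB σ ε)
        = A.mulVec (B.mulVec (cubeVert n (cube3Gen n) s)
            + cubeB σ.symm (fun i => ε (σ.symm i))) + cubeB σ ε := by
          rw [Matrix.mulVec_add, ← Matrix.mulVec_mulVec]
          abel
      _ = cubeVert n (cube3Gen n) s := by rw [h1]; exact h2
  have hone : A * B = 1 := eq_one_of_realize _ _ hcomp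
  have hdet : A.det * B.det = 1 := by
    rw [← Matrix.det_mul, hone, Matrix.det_one]
  exact Int.eq_one_or_neg_one_of_mul_eq_one hdet
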